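/- Let p be an odd prime and let a be an even positive integer. Then for each divisor d of a + 1 with d > 1, the number σ(p^a) = 1 + p + p² + ⋯ + p^a has a prime factor q such that the multiplicative order of p modulo q equals d. -/

import Mathlib

open ArithmeticFunction Polynomial Finset
open scoped ArithmeticFunction.sigma

lemma aux_one_add_pow {R : Type*} [CommRing R] (u : R) (hu : u * u = 0) :
    ∀ i : ℕ, (1 + u) ^ i = 1 + (i : R) * u := by
  intro i
  induction i with
  | zero => simp
  | succ n ih =>
    have h2 : (1 + (n:R)*u) * (1+u) = 1 + ((n:R)+1)*u + (n:R)*(u*u) := by ring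
    rw [pow_succ, ih, h2, hu, mul_zero, add_zero]
    push_cast
    ring

lemma aux_dvd (p d s : ℕ) (hp : 2 ≤ p) (hd0 : 0 < d) (hsd : s ∣ d) (hs1 : 1 < s) :
    (cyclotomic d ℤ).eval (p : ℤ) ∣ ∑ i ∈ range s, ((p : ℤ) ^ (d / s)) ^ i := by
  set m := d / s with hm
  have hmd : m ∣ d := Nat.div_dvd_of_dvd hsd
  have hmlt : m < d := Nat.div_lt_self hd0 hs1
  have hm0 : 0 < m := Nat.div_pos (Nat.le_of_dvd hd0 hsd) (by omega)
  have hmem : m ∈ d.properDivisors := Nat.mem_properDivisors.mpr ⟨hmd, hmlt⟩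
  have h1 := X_pow_sub_one_mul_prod_cyclotomic_eq_X_pow_sub_one_of_dvd ℤ hmd hd0.ne'
  have h1e := congrArg (Polynomial.eval (p : ℤ)) h1
  simp only [eval_mul, eval_sub, eval_pow, eval_X, eval_one, eval_prod] at h1e
  have hms : m * s = d := Nat.div_mul_cancel hsd
  have hgeom : (∑ i ∈ range s, ((p : ℤ) ^ m) ^ i) * ((p : ℤ) ^ m - 1)
      = (p : ℤ) ^ d - 1 := by
    rw [geom_sum_mul, ← pow_mul, hms]
  have hne : ((p : ℤ) ^ m - 1) ≠ 0 := by
    have : (1 : ℕ) < p ^ m := Nat.one_lt_pow hm0.ne' hp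
    have : (1 : ℤ) < (p : ℤ) ^ m := by exact_mod_cast this
    omega
  have heq : (∏ x ∈ d.divisors \ m.divisors, Polynomial.eval (p:ℤ) (cyclotomic x ℤ))
      = ∑ i ∈ range s, ((p : ℤ) ^ m) ^ i := by
    apply mul_left_cancel₀ hne
    rw [h1e, ← hgeom]; ring
  rw [← heq]
  apply Finset.dvd_prod_of_mem
  rw [Finset.mem_sdiff]
  constructor
  · exact Nat.mem_divisors_self d hd0.ne'
  · intro hmem'
    exact absurd (Nat.le_of_dvd hm0 (Nat.mem_divisors.mp hmem').1) (by omega)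

-- key: if q prime divides cyclotomic d ℤ eval p, and p^(d/s) ≡ 1 mod q, then q ∣ s
lemma aux_key (p d s : ℕ) (hp : 2 ≤ p) (hd0 : 0 < d) (hsd : s ∣ d) (hs1 : 1 < s)
    (q : ℕ) (hq : q.Prime) (hqC : (q : ℤ) ∣ (cyclotomic d ℤ).eval (p : ℤ))
    (hpm : (p : ZMod q) ^ (d / s) = 1) : q ∣ s := by
  haveI : Fact q.Prime := ⟨hq⟩
  have h := hqC.trans (aux_dvd p d s hp hd0 hsd hs1)
  rw [← ZMod.intCast_zmod_eq_zero_iff_dvd] at h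
  push_cast at h
  rw [hpm] at h
  simp at h
  rwa [ZMod.natCast_eq_zero_iff] at h

lemma aux_not_sq_dvd (p m r t : ℕ) (hr : r.Prime) (hrodd : Odd r) (hpm : p ^ m = 1 + t * r) :
    ¬ r ^ 2 ∣ ∑ i ∈ range r, (p ^ m) ^ i := by
  intro hdvd
  haveI : NeZero (r ^ 2) := ⟨pow_ne_zero 2 hr.pos.ne'⟩
  have h0 : ((∑ i ∈ range r, (p ^ m) ^ i : ℕ) : ZMod (r ^ 2)) = 0 := by
    rwa [ZMod.natCast_eq_zero_iff]
  set u : ZMod (r ^ 2) := (t : ZMod (r ^ 2)) * (r : ZMod (r ^ 2)) with hu_def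
  have hrr : (r : ZMod (r ^ 2)) * (r : ZMod (r ^ 2)) = 0 := by
    rw [← Nat.cast_mul, ← pow_two, ZMod.natCast_self]
  have hu : u * u = 0 := by
    calc u * u = ((t : ZMod (r^2)) * t) * ((r : ZMod (r^2)) * r) := by rw [hu_def]; ring
    _ = 0 := by rw [hrr, mul_zero]
  obtain ⟨c, hc⟩ := hrodd
  have hgauss : ∑ i ∈ range r, i = r * c := by
    have h2 := Finset.sum_range_id_mul_two r
    have h1' : r - 1 = 2 * c := by omega
    rw [h1'] at h2
    have h3 : r * (2 * c) = (r * c) * 2 := by ring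
    rw [h3] at h2
    omega
  have hsum : ((∑ i ∈ range r, (p ^ m) ^ i : ℕ) : ZMod (r ^ 2)) = (r : ZMod (r ^ 2)) := by
    push_cast
    have hx : ((p : ZMod (r ^ 2)) ^ m) = 1 + u := by
      have := congrArg (fun n : ℕ => (n : ZMod (r ^ 2))) hpm
      push_cast at this
      rw [this, hu_def]
    rw [hx]
    have : ∀ i ∈ range r, (1 + u) ^ i = 1 + (i : ZMod (r ^ 2)) * u :=
      fun i _ => aux_one_add_pow u hu i
    rw [Finset.sum_congr rfl this, Finset.sum_add_distrib]
    simp only [Finset.sum_const, Finset.card_range, nsmul_eq_mul, mul_one, ← Finset.sum_mul]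
    have hsi : (∑ i ∈ range r, (i : ZMod (r ^ 2))) = ((r * c : ℕ) : ZMod (r ^ 2)) := by
      rw [← hgauss]; push_cast; rfl
    rw [hsi]
    have : ((r * c : ℕ) : ZMod (r ^ 2)) * u = 0 := by
      push_cast
      calc (r : ZMod (r^2)) * c * u = ((c : ZMod (r^2)) * t) * ((r : ZMod (r^2)) * r) := by
            rw [hu_def]; ring
      _ = 0 := by rw [hrr, mul_zero]
    rw [this, add_zero]
  rw [h0] at hsum
  have : r ^ 2 ∣ r := by
    rwa [eq_comm, ZMod.natCast_eq_zero_iff] at hsum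
  have := Nat.le_of_dvd hr.pos this
  nlinarith [hr.two_le]

theorem sigma_prime_pow_has_prime_factor_of_order (p : ℕ) (hp : p.Prime) (hodd : Odd p)
    (a : ℕ) (ha : 0 < a) (heven : Even a) (d : ℕ) (hd : d ∣ a + 1) (hd1 : 1 < d) :
    ∃ q : ℕ, q.Prime ∧ q ∣ σ 1 (p ^ a) ∧ orderOf (p : ZMod q) = d := by
  have hp2 : 2 ≤ p := hp.two_le
  have hp3 : 3 ≤ p := by obtain ⟨k, hk⟩ := hodd; omega
  have hd0 : 0 < d := by omega
  have hdodd : Odd d := by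
    rcases Nat.even_or_odd d with he | ho
    · exfalso
      obtain ⟨j, hj⟩ := (he.two_dvd).trans hd
      obtain ⟨i, hi⟩ := heven
      omega
    · exact ho
  set C : ℤ := (cyclotomic d ℤ).eval (p : ℤ) with hCdef
  -- any prime factor of C divides σ 1 (p^a)
  have hCσ : ∀ q : ℕ, (q : ℤ) ∣ C → q ∣ σ 1 (p ^ a) := by
    intro q hq
    have h2 : C ∣ Polynomial.eval (p : ℤ) (∑ i ∈ range (a + 1), X ^ i) :=
      eval_dvd (cyclotomic_dvd_geom_sum_of_dvd ℤ hd (by omega))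
    simp only [eval_finset_sum, eval_pow, eval_X] at h2
    have h3 : (q : ℤ) ∣ ∑ i ∈ range (a + 1), (p : ℤ) ^ i := hq.trans h2
    have h4 : ((σ 1 (p ^ a) : ℕ) : ℤ) = ∑ i ∈ range (a + 1), (p : ℤ) ^ i := by
      rw [sigma_one_apply_prime_pow hp]; push_cast; rfl
    rw [← h4] at h3
    exact_mod_cast h3
  -- C is large
  have hC2 : ∀ r : ℕ, r.Prime → r ∣ d → (r : ℤ) < C := by
    intro r hr hrd
    have hnat : r ≤ 2 ^ d.totient := by
      calc r ≤ 2 ^ (r - 1) := by have := Nat.lt_two_pow_self (n := r - 1); omega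
      _ = 2 ^ r.totient := by rw [Nat.totient_prime hr]
      _ ≤ 2 ^ d.totient := Nat.pow_le_pow_right (by norm_num)
          (Nat.le_of_dvd (Nat.totient_pos.mpr hd0) (Nat.totient_dvd_of_dvd hrd))
    have heval : (cyclotomic d ℝ).eval ((p : ℤ) : ℝ) = (C : ℝ) := by
      rw [← map_cyclotomic_int d ℝ, eval_map, show ((p : ℤ) : ℝ) = Int.castRingHom ℝ (p : ℤ) from rfl,
        eval₂_hom]
      rfl
    have treal : (((p : ℤ) : ℝ) - 1) ^ d.totient < (cyclotomic d ℝ).eval ((p : ℤ) : ℝ) :=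
      sub_one_pow_totient_lt_cyclotomic_eval (by omega) (by push_cast; exact_mod_cast hp.one_lt)
    have h2r : (2 : ℝ) ^ d.totient ≤ (((p : ℤ) : ℝ) - 1) ^ d.totient := by
      apply pow_le_pow_left₀ (by norm_num)
      push_cast
      have : (3 : ℝ) ≤ (p : ℝ) := by exact_mod_cast hp3
      linarith
    have : (r : ℝ) < (C : ℝ) := by
      calc (r : ℝ) ≤ (2 : ℝ) ^ d.totient := by exact_mod_cast hnat
      _ ≤ _ := h2r
      _ < _ := by rw [← heval]; exact treal
    exact_mod_cast this
  have hC1 : 1 < C := by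
    have := hC2 d.minFac (Nat.minFac_prime (by omega)) d.minFac_dvd
    have h2 : 2 ≤ d.minFac := (Nat.minFac_prime (by omega)).two_le
    have : (2 : ℤ) ≤ (d.minFac : ℤ) := by exact_mod_cast h2
    omega
  -- p^d = 1 mod any prime factor of C
  have hCpd : C ∣ (p : ℤ) ^ d - 1 := by
    have := eval_dvd (x := (p : ℤ)) (cyclotomic.dvd_X_pow_sub_one d ℤ)
    simpa using this
  have hfacts : ∀ q : ℕ, q.Prime → (q : ℤ) ∣ C → (p : ZMod q) ^ d = 1 := by
    intro q hq hqC
    haveI := Fact.mk hq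
    have h1 : (q : ℤ) ∣ (p : ℤ) ^ d - 1 := hqC.trans hCpd
    rw [← ZMod.intCast_zmod_eq_zero_iff_dvd] at h1
    push_cast at h1
    linear_combination h1
  by_contra hcon
  push_neg at hcon
  -- every prime factor of C divides d
  have hall : ∀ q : ℕ, q.Prime → (q : ℤ) ∣ C → q ∣ d := by
    intro q hq hqC
    by_contra hqd
    haveI := Fact.mk hq
    haveI : NeZero (d : ZMod q) :=
      ⟨fun h0 => hqd ((ZMod.natCast_eq_zero_iff d q).mp h0)⟩
    have hroot : IsRoot (cyclotomic d (ZMod q)) ((p : ℕ) : ZMod q) := by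
      rw [IsRoot.def, ← map_cyclotomic_int d (ZMod q), eval_map, ← Int.cast_natCast p,
        show (((p : ℤ) : ZMod q)) = Int.castRingHom (ZMod q) (p : ℤ) from rfl, eval₂_hom,
        show (Int.castRingHom (ZMod q)) ((cyclotomic d ℤ).eval (p:ℤ)) = (((cyclotomic d ℤ).eval (p:ℤ) : ℤ) : ZMod q) from rfl,
        ZMod.intCast_zmod_eq_zero_iff_dvd]
      exact hqC
    exact hcon q hq (hCσ q hqC) (isRoot_cyclotomic_iff.mp hroot).eq_orderOf.symm
  -- basic facts about orders
  have hkey : ∀ q : ℕ, q.Prime → (q : ℤ) ∣ C →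
      orderOf (p : ZMod q) ∣ d ∧ orderOf (p : ZMod q) ∣ q - 1 ∧ 0 < orderOf (p : ZMod q) := by
    intro q hq hqC
    haveI := Fact.mk hq
    have hpd : (p : ZMod q) ^ d = 1 := hfacts q hq hqC
    have hp0 : (p : ZMod q) ≠ 0 := by
      intro h0
      rw [h0, zero_pow hd0.ne'] at hpd
      exact zero_ne_one hpd
    exact ⟨orderOf_dvd_of_pow_eq_one hpd, ZMod.orderOf_dvd_card_sub_one hp0,
      orderOf_pos_iff.mpr (isOfFinOrder_iff_pow_eq_one.mpr ⟨d, hd0, hpd⟩)⟩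
  -- every other prime of d divides the order
  have hothers : ∀ q : ℕ, q.Prime → (q : ℤ) ∣ C → ∀ s : ℕ, s.Prime → s ∣ d → s ≠ q →
      s ∣ orderOf (p : ZMod q) := by
    intro q hq hqC s hs hsd hsq
    obtain ⟨h_ed, h_eq1, h_e0⟩ := hkey q hq hqC
    by_contra hse
    have hcop : Nat.Coprime (orderOf (p : ZMod q)) s :=
      (hs.coprime_iff_not_dvd.mpr hse).symm
    have hed' : orderOf (p : ZMod q) ∣ d / s := by
      have hds : d / s * s = d := Nat.div_mul_cancel hsd
      exact hcop.dvd_of_dvd_mul_right (by rw [hds]; exact h_ed)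
    have hpm : (p : ZMod q) ^ (d / s) = 1 := orderOf_dvd_iff_pow_eq_one.mp hed'
    have := aux_key p d s hp2 hd0 hsd hs.one_lt q hq hqC hpm
    exact hsq ((Nat.prime_dvd_prime_iff_eq hq hs).mp this).symm
  -- the unique prime factor r of C
  set r := C.natAbs.minFac with hrdef
  have hCn1 : 1 < C.natAbs := by
    rw [Int.lt_iff_add_one_le] at hC1; omega
  have hrp : r.Prime := Nat.minFac_prime (by omega)
  have hrC : (r : ℤ) ∣ C := by
    have h1 : (r : ℤ) ∣ (C.natAbs : ℤ) := by exact_mod_cast Nat.minFac_dvd C.natAbs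
    exact h1.trans (Int.natAbs_dvd.mpr dvd_rfl)
  have hrd : r ∣ d := hall r hrp hrC
  have hrodd : Odd r := by
    rcases Nat.even_or_odd r with he | ho
    · exfalso
      obtain ⟨j, hj⟩ := (he.two_dvd).trans hrd
      obtain ⟨i, hi⟩ := hdodd
      omega
    · exact ho
  have huniq : ∀ q : ℕ, q.Prime → (q : ℤ) ∣ C → q = r := by
    intro q hq hqC
    by_contra hne
    obtain ⟨_, hq1, hq0⟩ := hkey q hq hqC
    obtain ⟨_, hr1, hr0⟩ := hkey r hrp hrC
    have h1 : q ∣ orderOf (p : ZMod r) := hothers r hrp hrC q hq (hall q hq hqC) hne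
    have h2 : r ∣ orderOf (p : ZMod q) := hothers q hq hqC r hrp hrd (fun h => hne h.symm)
    have hle1 : q ≤ orderOf (p : ZMod r) := Nat.le_of_dvd hr0 h1
    have hle2 : r ≤ orderOf (p : ZMod q) := Nat.le_of_dvd hq0 h2
    have hle3 : orderOf (p : ZMod r) ≤ r - 1 := Nat.le_of_dvd (by have := hrp.two_le; omega) hr1
    have hle4 : orderOf (p : ZMod q) ≤ q - 1 := Nat.le_of_dvd (by have := hq.two_le; omega) hq1
    have := hq.two_le; have := hrp.two_le
    omega
  -- C.natAbs is a power of r, at least r^2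
  have hCnpow : C.natAbs = r ^ C.natAbs.primeFactorsList.length :=
    Nat.eq_prime_pow_of_unique_prime_dvd (by omega)
      (fun {q} hq hqC => huniq q hq ((Int.natCast_dvd_natCast.mpr hqC).trans
        (Int.natAbs_dvd.mpr dvd_rfl)))
  have hCabs : (C.natAbs : ℤ) = C := Int.natAbs_of_nonneg (by omega)
  have hr2dvd : r ^ 2 ∣ C.natAbs := by
    have hrltC : r < C.natAbs := by
      have := hC2 r hrp hrd
      omega
    have hk2 : 2 ≤ C.natAbs.primeFactorsList.length := by
      have h1 : r ^ 1 < r ^ C.natAbs.primeFactorsList.length := by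
        rw [pow_one, ← hCnpow]; exact hrltC
      have := (pow_lt_pow_iff_right₀ hrp.one_lt).mp h1
      omega
    calc r ^ 2 ∣ r ^ C.natAbs.primeFactorsList.length := pow_dvd_pow r hk2
    _ = C.natAbs := hCnpow.symm
  -- p^(d/r) ≡ 1 mod r
  obtain ⟨h_ed, h_eq1, h_e0⟩ := hkey r hrp hrC
  have hrne : ¬ r ∣ orderOf (p : ZMod r) := by
    intro hdvd
    have h1 := Nat.le_of_dvd h_e0 hdvd
    have h2 : orderOf (p : ZMod r) ≤ r - 1 := Nat.le_of_dvd (by have := hrp.two_le; omega) h_eq1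
    have := hrp.two_le
    omega
  have hedr : orderOf (p : ZMod r) ∣ d / r := by
    have hcop : Nat.Coprime (orderOf (p : ZMod r)) r :=
      (hrp.coprime_iff_not_dvd.mpr hrne).symm
    have hds : d / r * r = d := Nat.div_mul_cancel hrd
    exact hcop.dvd_of_dvd_mul_right (by rw [hds]; exact h_ed)
  haveI := Fact.mk hrp
  have hpmr : ((p ^ (d / r) : ℕ) : ZMod r) = 1 := by
    push_cast
    exact orderOf_dvd_iff_pow_eq_one.mp hedr
  have h1p : 1 ≤ p ^ (d / r) := Nat.one_le_pow _ _ (by omega)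
  have hrdvd1 : r ∣ p ^ (d / r) - 1 := by
    rw [← ZMod.natCast_eq_zero_iff]
    push_cast [h1p]
    push_cast at hpmr
    rw [hpmr]; ring
  obtain ⟨t, ht⟩ := hrdvd1
  have hpmt : p ^ (d / r) = 1 + t * r := by
    have := Nat.mul_comm r t
    omega
  -- final contradiction
  have hCG : C ∣ ∑ i ∈ range r, ((p : ℤ) ^ (d / r)) ^ i :=
    aux_dvd p d r hp2 hd0 hrd hrp.one_lt
  have hfin : (r : ℤ) ^ 2 ∣ ∑ i ∈ range r, ((p : ℤ) ^ (d / r)) ^ i := by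
    have h1 : ((r ^ 2 : ℕ) : ℤ) ∣ (C.natAbs : ℤ) := Int.natCast_dvd_natCast.mpr hr2dvd
    rw [hCabs] at h1
    push_cast at h1
    exact h1.trans hCG
  have hfinn : r ^ 2 ∣ ∑ i ∈ range r, (p ^ (d / r)) ^ i := by
    have : ((∑ i ∈ range r, (p ^ (d / r)) ^ i : ℕ) : ℤ) = ∑ i ∈ range r, ((p : ℤ) ^ (d / r)) ^ i := by
      push_cast; rfl
    rw [← Int.natCast_dvd_natCast]
    push_cast
    convert hfin using 1
  exact aux_not_sq_dvd p (d / r) r t hrp hrodd hpmt hfinn
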